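/- Let 0 < γ < γ′ < 1 with γ′ < (1+γ²)/2, and set α = 2γ′ − 1, β = γ², I = (α, β], J = (γ, γ′]. Let n ≥ 1 and let q be a prime factor of g(n). If the interval qI = (αq, βq] contains at least one prime divisor of g(n), then all primes belonging to qJ = (γq, γ′q], with at most one exception, divide g(n). -/

import Mathlib

/-- Landau's function: the maximal order of a permutation of the symmetric group on `n` letters. -/
noncomputable def landau (n : ℕ) : ℕ :=
  Finset.univ.sup fun σ : Equiv.Perm (Fin n) => orderOf σ

/-- The largest prime factor of `m` (0 if `m` has no prime factor). -/
def maxPrimeFac (m : ℕ) : ℕ := m.primeFactors.sup id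


/-- cost of m : sum of maximal prime powers dividing m -/
def Acost (m : ℕ) : ℕ := ∑ p ∈ m.primeFactors, p ^ m.factorization p

theorem sum_le_prod_two_le {ι : Type*} (s : Finset ι) (f : ι → ℕ)
    (h : ∀ i ∈ s, 2 ≤ f i) : ∑ i ∈ s, f i ≤ ∏ i ∈ s, f i := by
  classical
  induction s using Finset.induction_on with
  | empty => simp
  | @insert a s ha ih =>

    rw [Finset.sum_insert ha, Finset.prod_insert ha]
    have hs : ∑ i ∈ s, f i ≤ ∏ i ∈ s, f i := ih fun i hi => h i (Finset.mem_insert_of_mem hi)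
    have hfa : 2 ≤ f a := h a (Finset.mem_insert_self a s)
    rcases Nat.eq_zero_or_pos (∑ i ∈ s, f i) with h0 | h0
    · have h1 : 1 ≤ ∏ i ∈ s, f i := Finset.one_le_prod' fun i hi =>
        le_trans (by norm_num) (h i (Finset.mem_insert_of_mem hi))
      calc f a + ∑ i ∈ s, f i = f a := by omega
        _ ≤ f a * ∏ i ∈ s, f i := Nat.le_mul_of_pos_right _ h1
    · -- sum positive so s nonempty → prod ≥ 2
      have hne : s.Nonempty := by
        by_contra hs'
        rw [Finset.not_nonempty_iff_eq_empty] at hs'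
        simp [hs'] at h0
      obtain ⟨b, hb⟩ := hne
      have h2 : 2 ≤ ∏ i ∈ s, f i := by
        calc 2 ≤ f b := h b (Finset.mem_insert_of_mem hb)
        _ ≤ ∏ i ∈ s, f i := Finset.single_le_prod' (fun i hi => le_trans one_le_two (h i (Finset.mem_insert_of_mem hi))) hb
      nlinarith [hs, hfa, h2]

theorem prod_dvd_of_pairwise_coprime {ι : Type*} (s : Finset ι) (f : ι → ℕ) (z : ℕ)
    (h : (s : Set ι).Pairwise (Function.onFun Nat.Coprime f)) (hd : ∀ i ∈ s, f i ∣ z) :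
    (∏ i ∈ s, f i) ∣ z := by
  classical
  induction s using Finset.induction_on with
  | empty => simp
  | @insert a s ha ih =>

    rw [Finset.prod_insert ha]
    have hcop : Nat.Coprime (f a) (∏ i ∈ s, f i) := by
      apply Nat.Coprime.prod_right
      intro i hi
      exact h (Finset.mem_insert_self a s) (Finset.mem_insert_of_mem hi)
        (by rintro rfl; exact ha hi)
    exact hcop.mul_dvd_of_dvd_of_dvd (hd a (Finset.mem_insert_self a s))
      (ih (h.mono (by simp [Finset.subset_insert])) fun i hi => hd i (Finset.mem_insert_of_mem hi))

theorem multiset_lcm_ne_zero (t : Multiset ℕ) (h : 0 ∉ t) : t.lcm ≠ 0 := by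
  induction t using Multiset.induction_on with
  | empty => simp
  | cons a t ih =>
    rw [Multiset.lcm_cons]
    have ha : a ≠ 0 := fun h' => h (h' ▸ Multiset.mem_cons_self a t)
    have ht : t.lcm ≠ 0 := ih fun h' => h (Multiset.mem_cons_of_mem h')
    rw [lcm_eq_nat_lcm]
    exact Nat.lcm_ne_zero ha ht

theorem pow_dvd_mem_of_dvd_lcm {p k : ℕ} (hp : p.Prime) (hk : 1 ≤ k) (t : Multiset ℕ)
    (h0 : 0 ∉ t) (h : p ^ k ∣ t.lcm) : ∃ c ∈ t, p ^ k ∣ c := by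
  induction t using Multiset.induction_on with
  | empty =>
    exfalso
    simp only [Multiset.lcm_zero] at h
    have := Nat.le_of_dvd one_pos h
    have h2 : 1 < p ^ k := Nat.one_lt_pow (by omega) hp.one_lt
    omega
  | cons a t ih =>
    rw [Multiset.lcm_cons] at h
    have ha : a ≠ 0 := fun h' => h0 (h' ▸ Multiset.mem_cons_self a t)
    have ht0 : 0 ∉ t := fun h' => h0 (Multiset.mem_cons_of_mem h')
    have ht : t.lcm ≠ 0 := multiset_lcm_ne_zero t ht0
    rw [lcm_eq_nat_lcm] at h
    rw [Nat.Prime.pow_dvd_iff_le_factorization hp (Nat.lcm_ne_zero ha ht),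
      Nat.factorization_lcm ha ht] at h
    simp only [Finsupp.sup_apply, le_sup_iff] at h
    rcases h with h | h
    · exact ⟨a, Multiset.mem_cons_self a t,
        (Nat.Prime.pow_dvd_iff_le_factorization hp ha).2 h⟩
    · obtain ⟨c, hc, hdvd⟩ := ih ht0 ((Nat.Prime.pow_dvd_iff_le_factorization hp ht).2 h)
      exact ⟨c, Multiset.mem_cons_of_mem hc, hdvd⟩

theorem Acost_orderOf_le {n : ℕ} (σ : Equiv.Perm (Fin n)) : Acost (orderOf σ) ≤ n := by
  classical
  set m := orderOf σ with hm
  have hm0 : m ≠ 0 := (orderOf_pos σ).ne'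
  have hlcm : σ.cycleType.lcm = m := Equiv.Perm.lcm_cycleType σ
  have h2le : ∀ c ∈ σ.cycleType, 2 ≤ c := fun c hc => Equiv.Perm.two_le_of_mem_cycleType hc
  have h0nm : (0 : ℕ) ∉ σ.cycleType := fun h => by have := h2le 0 h; omega
  have key : ∀ p ∈ m.primeFactors, ∃ c, c ∈ σ.cycleType ∧ p ^ m.factorization p ∣ c := by
    intro p hp
    have hpp : p.Prime := Nat.prime_of_mem_primeFactors hp
    have hk : 1 ≤ m.factorization p := (Nat.Prime.factorization_pos_of_dvd hpp hm0
      (Nat.dvd_of_mem_primeFactors hp))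
    have hdvd : p ^ m.factorization p ∣ m := Nat.ordProj_dvd m p
    obtain ⟨c, hc, hd⟩ := pow_dvd_mem_of_dvd_lcm hpp hk σ.cycleType h0nm (hlcm ▸ hdvd)
    exact ⟨c, hc, hd⟩
  choose g hg1 hg2 using key
  -- total function version
  let G : ℕ → ℕ := fun p => if h : p ∈ m.primeFactors then g p h else 0
  have hG1 : ∀ p ∈ m.primeFactors, G p ∈ σ.cycleType.toFinset := by
    intro p hp; simp only [G, dif_pos hp, Multiset.mem_toFinset]; exact hg1 p hp
  have hfib := Finset.sum_fiberwise_of_maps_to hG1 (fun p => p ^ m.factorization p)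
  have hACost : Acost m = ∑ y ∈ σ.cycleType.toFinset,
      ∑ p ∈ m.primeFactors.filter (fun p => G p = y), p ^ m.factorization p := by
    rw [hfib]; rfl
  have hfiber : ∀ y ∈ σ.cycleType.toFinset,
      (∑ p ∈ m.primeFactors.filter (fun p => G p = y), p ^ m.factorization p) ≤ y := by
    intro y hy
    have hy2 : 2 ≤ y := h2le y (Multiset.mem_toFinset.1 hy)
    set s := m.primeFactors.filter (fun p => G p = y) with hs
    have hsub : ∀ p ∈ s, p ∈ m.primeFactors ∧ G p = y := by
      intro p hp; exact Finset.mem_filter.1 hp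
    have hdvdy : ∀ p ∈ s, p ^ m.factorization p ∣ y := by
      intro p hp
      obtain ⟨hp1, hp2⟩ := hsub p hp
      have : G p = g p hp1 := dif_pos hp1
      rw [← hp2, this]
      exact hg2 p hp1
    have hcop : (s : Set ℕ).Pairwise (Function.onFun Nat.Coprime fun p => p ^ m.factorization p) := by
      intro a ha b hb hab
      have hpa : a.Prime := Nat.prime_of_mem_primeFactors (hsub a ha).1
      have hpb : b.Prime := Nat.prime_of_mem_primeFactors (hsub b hb).1
      exact Nat.Coprime.pow _ _ ((Nat.coprime_primes hpa hpb).2 hab)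
    have hprod := prod_dvd_of_pairwise_coprime s _ y hcop hdvdy
    have hsum := sum_le_prod_two_le s (fun p => p ^ m.factorization p) (by
      intro p hp
      have hpp : p.Prime := Nat.prime_of_mem_primeFactors (hsub p hp).1
      have hk : 1 ≤ m.factorization p := Nat.Prime.factorization_pos_of_dvd hpp hm0
        (Nat.dvd_of_mem_primeFactors (hsub p hp).1)
      calc 2 ≤ p := hpp.two_le
        _ = p ^ 1 := (pow_one p).symm
        _ ≤ p ^ m.factorization p := Nat.pow_le_pow_right hpp.pos hk)
    exact hsum.trans (Nat.le_of_dvd (by omega) hprod)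
  calc Acost m = _ := hACost
    _ ≤ ∑ y ∈ σ.cycleType.toFinset, y := Finset.sum_le_sum hfiber
    _ = σ.cycleType.dedup.sum := by
        rw [Finset.sum_eq_multiset_sum]
        simp [Multiset.toFinset]
    _ ≤ σ.cycleType.sum := by
        obtain ⟨u, hu⟩ := Multiset.le_iff_exists_add.1 (Multiset.dedup_le σ.cycleType)
        conv_rhs => rw [hu]
        rw [Multiset.sum_add]
        omega
    _ = σ.support.card := Equiv.Perm.sum_cycleType σ
    _ ≤ Fintype.card (Fin n) := Finset.card_le_univ _
    _ = n := Fintype.card_fin n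


theorem Acost_landau_le (n : ℕ) : Acost (landau n) ≤ n := by
  classical
  obtain ⟨σ, -, hσ⟩ := Finset.exists_mem_eq_sup (Finset.univ : Finset (Equiv.Perm (Fin n)))
    ⟨1, Finset.mem_univ 1⟩ (fun σ => orderOf σ)
  rw [landau, hσ]
  exact Acost_orderOf_le σ

theorem landau_ne_zero (n : ℕ) : landau n ≠ 0 := by
  classical
  obtain ⟨σ, -, hσ⟩ := Finset.exists_mem_eq_sup (Finset.univ : Finset (Equiv.Perm (Fin n)))
    ⟨1, Finset.mem_univ 1⟩ (fun σ => orderOf σ)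
  rw [landau, hσ]
  exact (orderOf_pos σ).ne'

theorem le_landau {n : ℕ} (m : ℕ) (hm : m ≠ 0) (h : Acost m ≤ n) : m ≤ landau n := by
  classical
  rcases eq_or_lt_of_le (Nat.one_le_iff_ne_zero.2 hm) with h1 | h1
  · rw [← h1]
    calc 1 = orderOf (1 : Equiv.Perm (Fin n)) := (orderOf_one).symm
      _ ≤ landau n := Finset.le_sup (Finset.mem_univ _)
  -- m ≥ 2 : build a permutation with cycle type the prime powers of m
  set s : Multiset ℕ := m.primeFactors.val.map (fun p => p ^ m.factorization p) with hs
  have hsum : s.sum = Acost m := by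
    rw [hs, Acost, Finset.sum]
  have h2le : ∀ a ∈ s, 2 ≤ a := by
    intro a ha
    rw [hs, Multiset.mem_map] at ha
    obtain ⟨p, hp, rfl⟩ := ha
    have hpp : p.Prime := Nat.prime_of_mem_primeFactors hp
    have hk : 1 ≤ m.factorization p := Nat.Prime.factorization_pos_of_dvd hpp hm
      (Nat.dvd_of_mem_primeFactors hp)
    calc 2 ≤ p := hpp.two_le
      _ = p ^ 1 := (pow_one p).symm
      _ ≤ p ^ m.factorization p := Nat.pow_le_pow_right hpp.pos hk
  obtain ⟨σ, hσ⟩ := (Equiv.Perm.exists_with_cycleType_iff (Fin n)).2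
    ⟨by rw [hsum, Fintype.card_fin]; exact h, h2le⟩
  have horder : orderOf σ = m := by
    rw [← Equiv.Perm.lcm_cycleType, hσ]
    apply Nat.dvd_antisymm
    · apply Multiset.lcm_dvd.2
      intro a ha
      rw [hs, Multiset.mem_map] at ha
      obtain ⟨p, hp, rfl⟩ := ha
      exact Nat.ordProj_dvd m p
    · -- m = ∏ p^k divides lcm
      conv_lhs => rw [← Nat.factorization_prod_pow_eq_self hm]
      rw [Nat.prod_factorization_eq_prod_primeFactors]
      apply prod_dvd_of_pairwise_coprime _ _ _
      · intro a ha b hb hab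
        have hpa : a.Prime := Nat.prime_of_mem_primeFactors (by simpa using ha)
        have hpb : b.Prime := Nat.prime_of_mem_primeFactors (by simpa using hb)
        exact Nat.Coprime.pow _ _ ((Nat.coprime_primes hpa hpb).2 hab)
      · intro p hp
        apply Multiset.dvd_lcm
        rw [hs, Multiset.mem_map]
        exact ⟨p, hp, rfl⟩
  calc m = orderOf σ := horder.symm
    _ ≤ landau n := Finset.le_sup (Finset.mem_univ _)

theorem Acost_one : Acost 1 = 0 := by simp [Acost]

theorem Acost_prime_pow {p k : ℕ} (hp : p.Prime) (hk : 1 ≤ k) : Acost (p ^ k) = p ^ k := by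
  rw [Acost, Nat.primeFactors_prime_pow (by omega) hp, Finset.sum_singleton,
    hp.factorization_pow]
  simp

theorem Acost_mul_coprime {x y : ℕ} (hx : x ≠ 0) (hy : y ≠ 0) (h : Nat.Coprime x y) :
    Acost (x * y) = Acost x + Acost y := by
  rw [Acost, Nat.primeFactors_mul hx hy,
    Finset.sum_union (Nat.Coprime.disjoint_primeFactors h)]
  congr 1
  · apply Finset.sum_congr rfl
    intro p hp
    have hpy : ¬ p ∣ y := fun hd => (Nat.Prime.one_lt (Nat.prime_of_mem_primeFactors hp)).ne'
      (Nat.eq_one_of_dvd_coprimes h (Nat.dvd_of_mem_primeFactors hp) hd)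
    rw [Nat.factorization_mul hx hy]
    simp [Nat.factorization_eq_zero_of_not_dvd hpy]
  · apply Finset.sum_congr rfl
    intro p hp
    have hpx : ¬ p ∣ x := fun hd => (Nat.Prime.one_lt (Nat.prime_of_mem_primeFactors hp)).ne'
      (Nat.eq_one_of_dvd_coprimes h hd (Nat.dvd_of_mem_primeFactors hp))
    rw [Nat.factorization_mul hx hy]
    simp [Nat.factorization_eq_zero_of_not_dvd hpx]

theorem coprime_pow_pow {u v : ℕ} (hu : u.Prime) (hv : v.Prime) (huv : u ≠ v) (i j : ℕ) :
    Nat.Coprime (u ^ i) (v ^ j) :=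
  Nat.Coprime.pow _ _ ((Nat.coprime_primes hu hv).2 huv)

theorem Acost_prime {p : ℕ} (hp : p.Prime) : Acost p = p := by
  simpa using Acost_prime_pow hp le_rfl


/-- Grantham's lemma: with α = 2γ′ − 1, β = γ², if q ∣ g(n) is prime and the
interval (αq, βq] contains a prime divisor of g(n), then all primes of (γq, γ′q],
with at most one exception, divide g(n). -/
theorem stmt8 (γ γ' : ℝ) (h0 : 0 < γ) (h1 : γ < γ') (h2 : γ' < 1)
    (h3 : γ' < (1 + γ ^ 2) / 2) (n q : ℕ) (hn : 1 ≤ n) (hq : q.Prime)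
    (hqd : q ∣ landau n)
    (hI : ∃ p : ℕ, p.Prime ∧ p ∣ landau n ∧
      (2 * γ' - 1) * (q : ℝ) < (p : ℝ) ∧ (p : ℝ) ≤ γ ^ 2 * (q : ℝ)) :
    ∀ p₁ p₂ : ℕ, p₁.Prime → p₂.Prime →
      γ * (q : ℝ) < (p₁ : ℝ) → (p₁ : ℝ) ≤ γ' * (q : ℝ) →
      γ * (q : ℝ) < (p₂ : ℝ) → (p₂ : ℝ) ≤ γ' * (q : ℝ) →
      ¬ p₁ ∣ landau n → ¬ p₂ ∣ landau n → p₁ = p₂ := by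
  classical
  intro p₁ p₂ hp₁ hp₂ hγ₁ hγ'₁ hγ₂ hγ'₂ hnd₁ hnd₂
  by_contra hne
  obtain ⟨p, hp, hpd, hα, hβ⟩ := hI
  set g := landau n with hgdef
  have hg0 : g ≠ 0 := landau_ne_zero n
  have hAg : Acost g ≤ n := Acost_landau_le n
  -- basic real facts
  have hqR : (0 : ℝ) < q := by exact_mod_cast hq.pos
  have hpR : (0 : ℝ) < p := by exact_mod_cast hp.pos
  -- p < q
  have hplt : p < q := by
    have : (p : ℝ) < q := by nlinarith
    exact_mod_cast this
  have hpqne : p ≠ q := Nat.ne_of_lt hplt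
  -- product and sum inequalities
  have hgqR : (0:ℝ) < γ * q := mul_pos h0 hqR
  have hprodR : (p : ℝ) * q < p₁ * p₂ := by
    nlinarith [mul_pos (sub_pos.2 hγ₁) (sub_pos.2 hγ₂), mul_le_mul_of_nonneg_right hβ hqR.le,
      mul_lt_mul_of_pos_left hγ₁ hgqR, mul_lt_mul_of_pos_left hγ₂ hgqR]
  have hprod : p * q < p₁ * p₂ := by exact_mod_cast hprodR
  have hsumR : (p₁ : ℝ) + p₂ < p + q := by nlinarith
  have hsum : p₁ + p₂ < p + q := by exact_mod_cast hsumR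
  -- distinctness
  have hne₁q : p₁ ≠ q := fun h => hnd₁ (h ▸ hqd)
  have hne₂q : p₂ ≠ q := fun h => hnd₂ (h ▸ hqd)
  have hne₁p : p₁ ≠ p := fun h => hnd₁ (h ▸ hpd)
  have hne₂p : p₂ ≠ p := fun h => hnd₂ (h ▸ hpd)
  -- decompose g
  set a := g.factorization q with hadef
  set s := g / q ^ a with hsdef
  have hgs : q ^ a * s = g := Nat.ordProj_mul_ordCompl_eq_self g q
  have ha1 : 1 ≤ a := hq.factorization_pos_of_dvd hg0 hqd
  have hqs : ¬ q ∣ s := Nat.not_dvd_ordCompl hq hg0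
  have hs0 : s ≠ 0 := (Nat.ordCompl_pos q hg0).ne'
  have hps : p ∣ s := by
    rcases (Nat.Prime.dvd_mul hp).1 (hgs ▸ hpd) with h | h
    · exact absurd ((Nat.prime_dvd_prime_iff_eq hp hq).1 (hp.dvd_of_dvd_pow h)) hpqne
    · exact h
  set b := s.factorization p with hbdef
  set r := s / p ^ b with hrdef
  have hsr : p ^ b * r = s := Nat.ordProj_mul_ordCompl_eq_self s p
  have hb1 : 1 ≤ b := hp.factorization_pos_of_dvd hs0 hps
  have hpr : ¬ p ∣ r := Nat.not_dvd_ordCompl hp hs0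
  have hr0 : r ≠ 0 := (Nat.ordCompl_pos p hs0).ne'
  have hrs : r ∣ s := Nat.ordCompl_dvd s p
  have hqr : ¬ q ∣ r := fun h => hqs (h.trans hrs)
  have hrg : r ∣ g := hrs.trans ⟨q ^ a, by rw [← hgs]; ring⟩
  have h₁r : ¬ p₁ ∣ r := fun h => hnd₁ (h.trans hrg)
  have h₂r : ¬ p₂ ∣ r := fun h => hnd₂ (h.trans hrg)
  -- coprimality helpers
  have cqp : Nat.Coprime q p := (Nat.coprime_primes hq hp).2 hpqne.symm
  have cq1 : Nat.Coprime q p₁ := (Nat.coprime_primes hq hp₁).2 hne₁q.symm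
  have cq2 : Nat.Coprime q p₂ := (Nat.coprime_primes hq hp₂).2 hne₂q.symm
  have cqr : Nat.Coprime q r := (hq.coprime_iff_not_dvd).2 hqr
  have cp1 : Nat.Coprime p p₁ := (Nat.coprime_primes hp hp₁).2 hne₁p.symm
  have cp2 : Nat.Coprime p p₂ := (Nat.coprime_primes hp hp₂).2 hne₂p.symm
  have cpr : Nat.Coprime p r := (hp.coprime_iff_not_dvd).2 hpr
  have c12 : Nat.Coprime p₁ p₂ := (Nat.coprime_primes hp₁ hp₂).2 hne
  have c1r : Nat.Coprime p₁ r := (hp₁.coprime_iff_not_dvd).2 h₁r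
  have c2r : Nat.Coprime p₂ r := (hp₂.coprime_iff_not_dvd).2 h₂r
  -- Acost of g
  have hAg_eq : Acost g = q ^ a + (p ^ b + Acost r) := by
    rw [← hgs, ← hsr]
    rw [Acost_mul_coprime (pow_ne_zero a hq.pos.ne') (by rw [hsr]; exact hs0)
      ((cqp.pow_right b).mul_right cqr |>.pow_left a),
      Acost_mul_coprime (pow_ne_zero b hp.pos.ne') hr0 (cpr.pow_left b),
      Acost_prime_pow hq ha1, Acost_prime_pow hp hb1]
  -- the swapped number
  have hY0 : p₂ * r ≠ 0 := mul_ne_zero hp₂.pos.ne' hr0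
  have hZ0 : p₁ * (p₂ * r) ≠ 0 := mul_ne_zero hp₁.pos.ne' hY0
  have hW0 : p ^ (b - 1) * (p₁ * (p₂ * r)) ≠ 0 := mul_ne_zero (pow_ne_zero _ hp.pos.ne') hZ0
  set m' := q ^ (a - 1) * (p ^ (b - 1) * (p₁ * (p₂ * r))) with hm'def
  have hm'0 : m' ≠ 0 := mul_ne_zero (pow_ne_zero _ hq.pos.ne') hW0
  have hAm' : Acost m' = Acost (q ^ (a - 1)) + (Acost (p ^ (b - 1)) + (p₁ + (p₂ + Acost r))) := by
    rw [hm'def,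
      Acost_mul_coprime (pow_ne_zero _ hq.pos.ne') hW0
        (((cqp.pow_right (b-1)).mul_right (cq1.mul_right (cq2.mul_right cqr))).pow_left _),
      Acost_mul_coprime (pow_ne_zero _ hp.pos.ne') hZ0
        ((cp1.mul_right (cp2.mul_right cpr)).pow_left _),
      Acost_mul_coprime hp₁.pos.ne' hY0 (c12.mul_right c1r),
      Acost_mul_coprime hp₂.pos.ne' hr0 c2r,
      Acost_prime hp₁, Acost_prime hp₂]
  -- cost savings
  have hq' : Acost (q ^ (a - 1)) + q ≤ q ^ a := by
    rcases Nat.eq_or_lt_of_le ha1 with h | h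
    · rw [← h]; simp [Acost_one]
    · have h2 : 1 ≤ a - 1 := by omega
      rw [Acost_prime_pow hq h2]
      have e1 : q ≤ q ^ (a - 1) := by
        calc q = q ^ 1 := (pow_one q).symm
          _ ≤ q ^ (a - 1) := Nat.pow_le_pow_right hq.pos h2
      have e2 : q ^ (a - 1) * q ≤ q ^ a := by
        rw [← pow_succ]
        exact Nat.pow_le_pow_right hq.pos (by omega)
      have e3 : q ^ (a - 1) + q ≤ q ^ (a - 1) * 2 := by omega
      calc q ^ (a - 1) + q ≤ q ^ (a - 1) * 2 := e3
        _ ≤ q ^ (a - 1) * q := Nat.mul_le_mul_left _ hq.two_le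
        _ ≤ q ^ a := e2
  have hp' : Acost (p ^ (b - 1)) + p ≤ p ^ b := by
    rcases Nat.eq_or_lt_of_le hb1 with h | h
    · rw [← h]; simp [Acost_one]
    · have h2 : 1 ≤ b - 1 := by omega
      rw [Acost_prime_pow hp h2]
      have e1 : p ≤ p ^ (b - 1) := by
        calc p = p ^ 1 := (pow_one p).symm
          _ ≤ p ^ (b - 1) := Nat.pow_le_pow_right hp.pos h2
      have e2 : p ^ (b - 1) * p ≤ p ^ b := by
        rw [← pow_succ]
        exact Nat.pow_le_pow_right hp.pos (by omega)
      have e3 : p ^ (b - 1) + p ≤ p ^ (b - 1) * 2 := by omega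
      calc p ^ (b - 1) + p ≤ p ^ (b - 1) * 2 := e3
        _ ≤ p ^ (b - 1) * p := Nat.mul_le_mul_left _ hp.two_le
        _ ≤ p ^ b := e2
  have hAm'_le : Acost m' ≤ n := by
    have : Acost m' + (p + q) ≤ Acost g + (p₁ + p₂) := by
      rw [hAm', hAg_eq]; omega
    omega
  -- m' > g
  have hqa : q ^ a = q ^ (a - 1) * q := by
    conv_lhs => rw [show a = (a - 1) + 1 by omega]
    rw [pow_succ]
  have hpb : p ^ b = p ^ (b - 1) * p := by
    conv_lhs => rw [show b = (b - 1) + 1 by omega]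
    rw [pow_succ]
  have hgC : g = (p * q) * (q ^ (a - 1) * (p ^ (b - 1) * r)) := by
    rw [← hgs, ← hsr, hqa, hpb]; ring
  have hm'C : m' = (p₁ * p₂) * (q ^ (a - 1) * (p ^ (b - 1) * r)) := by
    rw [hm'def]; ring
  have hC0 : 0 < q ^ (a - 1) * (p ^ (b - 1) * r) := Nat.pos_of_ne_zero
    (mul_ne_zero (pow_ne_zero _ hq.pos.ne') (mul_ne_zero (pow_ne_zero _ hp.pos.ne') hr0))
  have hgm' : g < m' := by
    rw [hgC, hm'C]
    exact Nat.mul_lt_mul_of_lt_of_le hprod (le_refl _) hC0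
  have : m' ≤ g := le_landau m' hm'0 hAm'_le
  omega
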